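/- The curve C₂ = {(x,y) ∈ ℂ² : xy² = 1} is not uniformly flat. Explicitly: for every δ ∈ (0, 1), the points p₊ = (δ⁻², δ) and p₋ = (δ⁻², −δ) lie on C₂, are distinct, and the point w = (δ⁻² − δ⁴/2, 0) ∈ ℂ² satisfies: (i) w − p₊ is orthogonal (with respect to the Hermitian inner product on ℂ²) to the tangent line T_{p₊}C₂ = ℂ·(−2δ⁻³, 1), (ii) w − p₋ is orthogonal to T_{p₋}C₂ = ℂ·(2δ⁻³, 1), and (iii) ‖w − p₊‖ = ‖w − p₋‖ = δ·(1 + δ⁶/4)^{1/2} < 2δ. Consequently, for every ε > 0 there exist distinct points of C₂ whose complex normal disks of radius ε intersect, so the ε-neighborhood of C₂ is not a tubular neighborhood for any ε > 0. -/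

import Mathlib

open ComplexConjugate

/-- The Hermitian inner product on `ℂ²`. -/
def herm2 (u v : ℂ × ℂ) : ℂ := u.1 * conj v.1 + u.2 * conj v.2

/-- The Euclidean norm on `ℂ²`. -/
noncomputable def nrm2 (u : ℂ × ℂ) : ℝ := Real.sqrt (‖u.1‖ ^ 2 + ‖u.2‖ ^ 2)

/-- The curve `C₂ = {xy² = 1} ⊆ ℂ²`. -/
def C2curve : Set (ℂ × ℂ) := {v | v.1 * v.2 ^ 2 = 1}

lemma herm_plus (δ : ℝ) (h0 : 0 < δ) :
    herm2 (((((δ : ℂ) ^ 2)⁻¹ - (δ : ℂ) ^ 4 / 2, 0) : ℂ × ℂ) -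
        ((((δ : ℂ) ^ 2)⁻¹, (δ : ℂ)))) (-2 * ((δ : ℂ) ^ 3)⁻¹, 1) = 0 := by
  have hδ : (δ : ℂ) ≠ 0 := by exact_mod_cast h0.ne'
  simp only [herm2, Prod.fst_sub, Prod.snd_sub, map_mul, map_inv₀, map_pow, map_neg,
    map_ofNat, Complex.conj_ofReal, map_one]
  field_simp
  ring

lemma herm_minus (δ : ℝ) (h0 : 0 < δ) :
    herm2 (((((δ : ℂ) ^ 2)⁻¹ - (δ : ℂ) ^ 4 / 2, 0) : ℂ × ℂ) -
        ((((δ : ℂ) ^ 2)⁻¹, -(δ : ℂ)))) (2 * ((δ : ℂ) ^ 3)⁻¹, 1) = 0 := by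
  have hδ : (δ : ℂ) ≠ 0 := by exact_mod_cast h0.ne'
  simp only [herm2, Prod.fst_sub, Prod.snd_sub, map_mul, map_inv₀, map_pow, map_neg,
    map_ofNat, Complex.conj_ofReal, map_one]
  field_simp
  ring

lemma nrm_plus (δ : ℝ) (h0 : 0 < δ) :
    nrm2 (((((δ : ℂ) ^ 2)⁻¹ - (δ : ℂ) ^ 4 / 2, 0) : ℂ × ℂ) -
        ((((δ : ℂ) ^ 2)⁻¹, (δ : ℂ)))) = δ * Real.sqrt (1 + δ ^ 6 / 4) := by
  have h1 : (((δ : ℂ) ^ 2)⁻¹ - (δ : ℂ) ^ 4 / 2 - ((δ : ℂ) ^ 2)⁻¹) = ((-(δ^4/2) : ℝ) : ℂ) := by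
    push_cast; ring
  simp only [nrm2, Prod.fst_sub, Prod.snd_sub, h1, Complex.norm_real, zero_sub, norm_neg,
    Complex.norm_real, Real.norm_eq_abs]
  rw [abs_of_nonneg (by positivity), abs_of_pos h0,
    show (δ^4/2)^2 + δ^2 = δ^2 * (1 + δ^6/4) by ring,
    Real.sqrt_mul (sq_nonneg δ), Real.sqrt_sq h0.le]

lemma nrm_eq (δ : ℝ) :
    nrm2 (((((δ : ℂ) ^ 2)⁻¹ - (δ : ℂ) ^ 4 / 2, 0) : ℂ × ℂ) -
        ((((δ : ℂ) ^ 2)⁻¹, (δ : ℂ))))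
      = nrm2 (((((δ : ℂ) ^ 2)⁻¹ - (δ : ℂ) ^ 4 / 2, 0) : ℂ × ℂ) -
        ((((δ : ℂ) ^ 2)⁻¹, -(δ : ℂ)))) := by
  simp [nrm2]

lemma sqrt_lt (δ : ℝ) (h0 : 0 < δ) (h1 : δ < 1) :
    δ * Real.sqrt (1 + δ ^ 6 / 4) < 2 * δ := by
  have h6 : δ ^ 6 < 1 := pow_lt_one₀ h0.le h1 (by norm_num)
  have hs : Real.sqrt (1 + δ ^ 6 / 4) < 2 := by
    rw [show (2:ℝ) = Real.sqrt 4 by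
      rw [show (4:ℝ) = 2^2 by norm_num, Real.sqrt_sq (by norm_num)]]
    exact Real.sqrt_lt_sqrt (by positivity) (by linarith)
  nlinarith [Real.sqrt_nonneg (1 + δ ^ 6 / 4)]

lemma memC (δ : ℝ) (h0 : 0 < δ) : ((((δ : ℂ) ^ 2)⁻¹, (δ : ℂ)) ∈ C2curve) ∧
    ((((δ : ℂ) ^ 2)⁻¹, -(δ : ℂ)) ∈ C2curve) := by
  have hδ : (δ : ℂ) ≠ 0 := by exact_mod_cast h0.ne'
  refine ⟨inv_mul_cancel₀ (pow_ne_zero 2 hδ), ?_⟩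
  show ((δ:ℂ)^2)⁻¹ * (-(δ:ℂ))^2 = 1
  rw [neg_sq]; exact inv_mul_cancel₀ (pow_ne_zero 2 hδ)

lemma neq (δ : ℝ) (h0 : 0 < δ) :
    (((((δ : ℂ) ^ 2)⁻¹, (δ : ℂ))) : ℂ × ℂ) ≠ (((δ : ℂ) ^ 2)⁻¹, -(δ : ℂ)) := by
  have hδ : (δ : ℂ) ≠ 0 := by exact_mod_cast h0.ne'
  intro h
  have := congrArg Prod.snd h
  simp only at this
  exact hδ (by linear_combination this / 2)

theorem statement17 :
    (∀ δ : ℝ, 0 < δ → δ < 1 →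
      ((((δ : ℂ) ^ 2)⁻¹, (δ : ℂ)) ∈ C2curve ∧
       (((δ : ℂ) ^ 2)⁻¹, -(δ : ℂ)) ∈ C2curve ∧
       (((((δ : ℂ) ^ 2)⁻¹, (δ : ℂ))) : ℂ × ℂ) ≠ (((δ : ℂ) ^ 2)⁻¹, -(δ : ℂ))) ∧
      herm2 (((((δ : ℂ) ^ 2)⁻¹ - (δ : ℂ) ^ 4 / 2, 0) : ℂ × ℂ) -
          ((((δ : ℂ) ^ 2)⁻¹, (δ : ℂ)))) (-2 * ((δ : ℂ) ^ 3)⁻¹, 1) = 0 ∧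
      herm2 (((((δ : ℂ) ^ 2)⁻¹ - (δ : ℂ) ^ 4 / 2, 0) : ℂ × ℂ) -
          ((((δ : ℂ) ^ 2)⁻¹, -(δ : ℂ)))) (2 * ((δ : ℂ) ^ 3)⁻¹, 1) = 0 ∧
      (nrm2 (((((δ : ℂ) ^ 2)⁻¹ - (δ : ℂ) ^ 4 / 2, 0) : ℂ × ℂ) -
          ((((δ : ℂ) ^ 2)⁻¹, (δ : ℂ))))
        = nrm2 (((((δ : ℂ) ^ 2)⁻¹ - (δ : ℂ) ^ 4 / 2, 0) : ℂ × ℂ) -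
          ((((δ : ℂ) ^ 2)⁻¹, -(δ : ℂ)))) ∧
       nrm2 (((((δ : ℂ) ^ 2)⁻¹ - (δ : ℂ) ^ 4 / 2, 0) : ℂ × ℂ) -
          ((((δ : ℂ) ^ 2)⁻¹, (δ : ℂ))))
        = δ * Real.sqrt (1 + δ ^ 6 / 4) ∧
       δ * Real.sqrt (1 + δ ^ 6 / 4) < 2 * δ)) ∧
    (∀ ε : ℝ, 0 < ε → ∃ t t' : ℂ, ∃ w : ℂ × ℂ, t ≠ 0 ∧ t' ≠ 0 ∧
      ((((t ^ 2)⁻¹, t)) : ℂ × ℂ) ≠ ((t' ^ 2)⁻¹, t') ∧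
      herm2 (w - ((t ^ 2)⁻¹, t)) (-2 * (t ^ 3)⁻¹, 1) = 0 ∧
      herm2 (w - ((t' ^ 2)⁻¹, t')) (-2 * (t' ^ 3)⁻¹, 1) = 0 ∧
      nrm2 (w - ((t ^ 2)⁻¹, t)) < ε ∧ nrm2 (w - ((t' ^ 2)⁻¹, t')) < ε) := by
  constructor
  · intro δ h0 h1
    exact ⟨⟨(memC δ h0).1, (memC δ h0).2, neq δ h0⟩, herm_plus δ h0, herm_minus δ h0,
      nrm_eq δ, nrm_plus δ h0, sqrt_lt δ h0 h1⟩
  · intro ε hε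
    set δ : ℝ := min (ε / 2) (1 / 2) with hδdef
    have h0 : 0 < δ := lt_min (by linarith) (by norm_num)
    have h1 : δ < 1 := lt_of_le_of_lt (min_le_right _ _) (by norm_num)
    have h2 : 2 * δ ≤ ε := by
      have := min_le_left (ε / 2) (1 / 2)
      simp only [← hδdef] at this
      linarith
    have hδC : (δ : ℂ) ≠ 0 := by exact_mod_cast h0.ne'
    refine ⟨(δ : ℂ), -(δ : ℂ), ((((δ : ℂ) ^ 2)⁻¹ - (δ : ℂ) ^ 4 / 2, 0) : ℂ × ℂ),
      hδC, neg_ne_zero.mpr hδC, ?_, ?_, ?_, ?_, ?_⟩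
    · rw [show ((-(δ:ℂ)) ^ 2)⁻¹ = (((δ:ℂ)) ^ 2)⁻¹ by rw [neg_sq]]
      exact neq δ h0
    · exact herm_plus δ h0
    · rw [show ((-(δ:ℂ)) ^ 2)⁻¹ = (((δ:ℂ)) ^ 2)⁻¹ by rw [neg_sq],
        show (-2 * ((-(δ:ℂ)) ^ 3)⁻¹ : ℂ) = 2 * (((δ:ℂ)) ^ 3)⁻¹ by
          rw [Odd.neg_pow ⟨1, by norm_num⟩, inv_neg]; ring]
      exact herm_minus δ h0
    · rw [nrm_plus δ h0]
      exact lt_of_lt_of_le (sqrt_lt δ h0 h1) h2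
    · rw [show ((-(δ:ℂ)) ^ 2)⁻¹ = (((δ:ℂ)) ^ 2)⁻¹ by rw [neg_sq], ← nrm_eq δ, nrm_plus δ h0]
      exact lt_of_lt_of_le (sqrt_lt δ h0 h1) h2
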